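/- Let $A$ be an $n \times n$ real normal matrix. Then $\|A\| \le \|g A g^{-1}\|$ for all $g \in GL_n(\mathbb{R})$, where $\|\cdot\|$ denotes the Frobenius norm. Moreover, equality for a given $g$ implies $g A g^{-1}$ is normal. -/

import Mathlib

open Matrix


lemma scalar_key {n : ℕ} (d : Fin n → ℝ) (hd : ∀ i, 0 < d i) (c : Fin n → Fin n → ℝ)
    (hc : ∀ i j, 0 ≤ c i j) (hrow : ∀ i, ∑ j, c i j = ∑ j, c j i) :
    (∑ i, ∑ j, c i j) ≤ (∑ i, ∑ j, c i j * (d i / d j)) ∧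
    ((∑ i, ∑ j, c i j * (d i / d j)) = (∑ i, ∑ j, c i j) → ∀ i j, c i j = 0 ∨ d i = d j) := by
  set L : Fin n → Fin n → ℝ := fun i j => Real.log (d i) - Real.log (d j) with hL
  have hlog : (∑ i, ∑ j, c i j * L i j) = 0 := by
    have : (∑ i, ∑ j, c i j * L i j)
        = (∑ i, (∑ j, c i j) * Real.log (d i)) - (∑ j, (∑ i, c i j) * Real.log (d j)) := by
      have e1 : ∀ i, (∑ j, c i j * Real.log (d i)) = (∑ j, c i j) * Real.log (d i) :=
        fun i => (Finset.sum_mul _ _ _).symm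
      have e2 : (∑ i, ∑ j, c i j * Real.log (d j)) = ∑ j, (∑ i, c i j) * Real.log (d j) := by
        rw [Finset.sum_comm]
        exact Finset.sum_congr rfl fun j _ => (Finset.sum_mul _ _ _).symm
      simp only [hL, mul_sub, Finset.sum_sub_distrib]
      rw [e2]
      congr 1
      exact Finset.sum_congr rfl fun i _ => e1 i
    rw [this]
    have : ∀ j, (∑ i, c i j) = ∑ x, c j x := fun j => (hrow j).symm ▸ rfl
    have h2 : (∑ j, (∑ i, c i j) * Real.log (d j)) = ∑ j, (∑ x, c j x) * Real.log (d j) := by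
      refine Finset.sum_congr rfl fun j _ => ?_
      rw [← hrow j]
    rw [h2, sub_self]
  have hpt : ∀ i j, c i j * (1 + L i j) ≤ c i j * (d i / d j) := by
    intro i j
    apply mul_le_mul_of_nonneg_left _ (hc i j)
    have hx : 0 < d i / d j := div_pos (hd i) (hd j)
    have h := Real.log_le_sub_one_of_pos hx
    rw [Real.log_div (hd i).ne' (hd j).ne'] at h
    simp only [hL]; linarith
  have hsum1 : (∑ i, ∑ j, c i j * (1 + L i j)) = ∑ i, ∑ j, c i j := by
    have : ∀ i j, c i j * (1 + L i j) = c i j + c i j * L i j := fun i j => by ring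
    simp only [this, Finset.sum_add_distrib]
    rw [hlog, add_zero]
  have hle : (∑ i, ∑ j, c i j) ≤ ∑ i, ∑ j, c i j * (d i / d j) := by
    rw [← hsum1]
    exact Finset.sum_le_sum fun i _ => Finset.sum_le_sum fun j _ => hpt i j
  refine ⟨hle, fun heq i j => ?_⟩
  by_cases hcij : c i j = 0
  · exact Or.inl hcij
  right
  have hF0 : ∑ p ∈ (Finset.univ ×ˢ Finset.univ : Finset (Fin n × Fin n)),
      (c p.1 p.2 * (d p.1 / d p.2) - c p.1 p.2 * (1 + L p.1 p.2)) = 0 := by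
    rw [Finset.sum_sub_distrib, Finset.sum_product, Finset.sum_product, heq, hsum1, sub_self]
  have hFnn : ∀ p ∈ (Finset.univ ×ˢ Finset.univ : Finset (Fin n × Fin n)),
      0 ≤ c p.1 p.2 * (d p.1 / d p.2) - c p.1 p.2 * (1 + L p.1 p.2) :=
    fun p _ => sub_nonneg.mpr (hpt p.1 p.2)
  have hz := (Finset.sum_eq_zero_iff_of_nonneg hFnn).mp hF0 (i, j)
      (Finset.mem_product.mpr ⟨Finset.mem_univ i, Finset.mem_univ j⟩)
  have hcpos : 0 < c i j := lt_of_le_of_ne (hc i j) (Ne.symm hcij)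
  have hratio : d i / d j = 1 + L i j := by
    have := sub_eq_zero.mp hz
    exact mul_left_cancel₀ hcij this
  have hone : d i / d j = 1 := by
    by_contra hne
    have hx : 0 < d i / d j := div_pos (hd i) (hd j)
    have h := Real.log_lt_sub_one_of_pos hx hne
    rw [Real.log_div (hd i).ne' (hd j).ne'] at h
    simp only [hL] at hratio
    linarith
  exact (div_eq_one_iff_eq (hd j).ne').mp hone


lemma ct' {n : ℕ} (A : Matrix (Fin n) (Fin n) ℝ) : Aᴴ = Aᵀ := by
  ext i j; simp [conjTranspose_apply]

lemma trace_conj' {n : ℕ} (U M : Matrix (Fin n) (Fin n) ℝ) (hU : Uᵀ * U = 1) :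
    trace (U * M * Uᵀ) = trace M := by
  rw [trace_mul_comm, ← mul_assoc, hU, one_mul]

lemma trace_formula' {n : ℕ} (C : Matrix (Fin n) (Fin n) ℝ) (e f : Fin n → ℝ) :
    trace (C * diagonal e * Cᵀ * diagonal f) = ∑ i, ∑ j, C i j ^ 2 * e j * f i := by
  simp only [trace, diag, mul_apply, transpose_apply, diagonal_apply, mul_ite, mul_zero,
    ite_mul, zero_mul, Finset.sum_ite_eq, Finset.sum_ite_eq', Finset.mem_univ, if_true]
  refine Finset.sum_congr rfl fun i _ => ?_
  rw [Finset.sum_mul]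
  exact Finset.sum_congr rfl fun j _ => by ring

lemma trace_sq' {n : ℕ} (C : Matrix (Fin n) (Fin n) ℝ) :
    trace (C * Cᵀ) = ∑ i, ∑ j, C i j ^ 2 := by
  simp [trace, diag, mul_apply, sq]

lemma main_ineq {n : ℕ} (A : Matrix (Fin n) (Fin n) ℝ) (hA : A * Aᵀ = Aᵀ * A)
    (g : GL (Fin n) ℝ) :
    (∑ i, ∑ j, A i j ^ 2) ≤
      (∑ i, ∑ j, ((↑g : Matrix (Fin n) (Fin n) ℝ) * A * (↑g⁻¹ : Matrix (Fin n) (Fin n) ℝ)) i j ^ 2) ∧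
    ((∑ i, ∑ j, ((↑g : Matrix (Fin n) (Fin n) ℝ) * A * (↑g⁻¹ : Matrix (Fin n) (Fin n) ℝ)) i j ^ 2)
        = (∑ i, ∑ j, A i j ^ 2) →
      ((↑g : Matrix (Fin n) (Fin n) ℝ) * A * (↑g⁻¹ : Matrix (Fin n) (Fin n) ℝ))
          * ((↑g : Matrix (Fin n) (Fin n) ℝ) * A * (↑g⁻¹ : Matrix (Fin n) (Fin n) ℝ))ᵀ
        = ((↑g : Matrix (Fin n) (Fin n) ℝ) * A * (↑g⁻¹ : Matrix (Fin n) (Fin n) ℝ))ᵀ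
          * ((↑g : Matrix (Fin n) (Fin n) ℝ) * A * (↑g⁻¹ : Matrix (Fin n) (Fin n) ℝ))) := by
  set gm : Matrix (Fin n) (Fin n) ℝ := (↑g : Matrix (Fin n) (Fin n) ℝ) with hgm
  set gi : Matrix (Fin n) (Fin n) ℝ := (↑g⁻¹ : Matrix (Fin n) (Fin n) ℝ) with hgi
  have hg1 : gm * gi = 1 := by exact_mod_cast g.mul_inv
  have hg2 : gi * gm = 1 := by exact_mod_cast g.inv_mul
  have hu : IsUnit gm := g.isUnit
  -- P and its inverse
  obtain ⟨P, hPdef⟩ : ∃ P, P = gmᵀ * gm := ⟨_, rfl⟩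
  obtain ⟨Pinv, hPinvdef⟩ : ∃ Q, Q = gi * giᵀ := ⟨_, rfl⟩
  have hgit : giᵀ * gmᵀ = 1 := by rw [← transpose_mul, hg1, transpose_one]
  have hgmt : gmᵀ * giᵀ = 1 := by rw [← transpose_mul, hg2, transpose_one]
  have hPinvP : Pinv * P = 1 := by
    rw [hPdef, hPinvdef]
    calc gi * giᵀ * (gmᵀ * gm) = gi * (giᵀ * gmᵀ) * gm := by noncomm_ring
      _ = 1 := by rw [hgit, mul_one, hg2]
  have hPPinv : P * Pinv = 1 := by
    rw [hPdef, hPinvdef]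
    calc gmᵀ * gm * (gi * giᵀ) = gmᵀ * (gm * gi) * giᵀ := by noncomm_ring
      _ = 1 := by rw [hg1, mul_one, hgmt]
  have hPsym : Pᵀ = P := by rw [hPdef]; simp [transpose_mul]
  have hPinvsym : Pinvᵀ = Pinv := by rw [hPinvdef]; simp [transpose_mul]
  -- spectral theorem for P
  have hH : P.IsHermitian := by
    rw [hPdef]
    have := isHermitian_conjTranspose_mul_self gm
    rwa [ct'] at this
  set d := hH.eigenvalues with hd
  set U := (hH.eigenvectorUnitary : Matrix (Fin n) (Fin n) ℝ) with hUdef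
  have hspec : P = U * diagonal d * Uᵀ := by
    have h := hH.spectral_theorem
    rw [Unitary.conjStarAlgAut_apply] at h
    rw [← ct' U, ← Matrix.star_eq_conjTranspose]
    exact h
  have hU1 : Uᵀ * U = 1 := by
    rw [← ct' U, ← Matrix.star_eq_conjTranspose]
    exact Matrix.mem_unitaryGroup_iff'.mp hH.eigenvectorUnitary.2
  have hU2 : U * Uᵀ = 1 := by
    rw [← ct' U, ← Matrix.star_eq_conjTranspose]
    exact Matrix.mem_unitaryGroup_iff.mp hH.eigenvectorUnitary.2
  have hps : P.PosSemidef := by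
    rw [hPdef]
    have := Matrix.posSemidef_conjTranspose_mul_self gm
    rwa [ct'] at this
  have hdnn : ∀ i, 0 ≤ d i := fun i => hps.eigenvalues_nonneg i
  have hdpos : ∀ i, 0 < d i := by
    have h2 : P.det ≠ 0 := by
      rw [hPdef, det_mul, det_transpose]
      have : gm.det ≠ 0 := by
        simpa using ((Matrix.isUnit_iff_isUnit_det gm).mp hu).ne_zero
      exact mul_ne_zero this this
    have h1 : P.det = ∏ j, d j := by simpa using hH.det_eq_prod_eigenvalues
    rw [h1] at h2
    intro i
    rcases (hdnn i).lt_or_eq with h | h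
    · exact h
    · exact absurd (Finset.prod_eq_zero (Finset.mem_univ i) h.symm) h2
  -- cancellation helpers
  have hcancel1 : ∀ X : Matrix (Fin n) (Fin n) ℝ, Uᵀ * (U * X) = X := fun X => by
    rw [← mul_assoc, hU1, one_mul]
  have hcancel2 : ∀ X : Matrix (Fin n) (Fin n) ℝ, U * (Uᵀ * X) = X := fun X => by
    rw [← mul_assoc, hU2, one_mul]
  have hconjmul : ∀ X Y : Matrix (Fin n) (Fin n) ℝ,
      (U * X * Uᵀ) * (U * Y * Uᵀ) = U * (X * Y) * Uᵀ := by
    intro X Y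
    simp only [mul_assoc]
    rw [hcancel1]
  have hconjmul' : ∀ X Y : Matrix (Fin n) (Fin n) ℝ,
      (Uᵀ * X * U) * (Uᵀ * Y * U) = Uᵀ * (X * Y) * U := by
    intro X Y
    simp only [mul_assoc]
    rw [hcancel2]
  -- inverse of P via spectral data
  obtain ⟨C, hCdef⟩ : ∃ C, C = Uᵀ * A * U := ⟨_, rfl⟩
  have hAC : U * C * Uᵀ = A := by
    rw [hCdef]
    simp only [mul_assoc]
    rw [hU2, mul_one, hcancel2]
  have hCT : Cᵀ = Uᵀ * Aᵀ * U := by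
    rw [hCdef]
    simp [transpose_mul, mul_assoc]
  have hACT : U * Cᵀ * Uᵀ = Aᵀ := by
    rw [hCT]
    simp only [mul_assoc]
    rw [hU2, mul_one, hcancel2]
  -- inverse of P via spectral data
  set E : Matrix (Fin n) (Fin n) ℝ := diagonal (fun i => (d i)⁻¹) with hEdef
  have hPQ : P * (U * E * Uᵀ) = 1 := by
    rw [hspec, hconjmul, hEdef, diagonal_mul_diagonal]
    have : (fun i => d i * (d i)⁻¹) = fun _ => (1 : ℝ) := by
      funext i; exact mul_inv_cancel₀ (hdpos i).ne'
    rw [this, diagonal_one, mul_one, hU2]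
  have hPinvEq : Pinv = U * E * Uᵀ := left_inv_eq_right_inv hPinvP hPQ
  -- trace computations
  have htr1 : trace (A * Aᵀ) = ∑ i, ∑ j, C i j ^ 2 := by
    rw [← hACT, ← hAC, hconjmul, trace_conj' _ _ hU1, trace_sq']
  have hB1 : (gm * A * gi) * (gm * A * gi)ᵀ = gm * (A * Pinv * Aᵀ) * gmᵀ := by
    rw [hPinvdef]
    simp only [transpose_mul]
    noncomm_ring
  have htr2 : trace ((gm * A * gi) * (gm * A * gi)ᵀ) = trace (A * Pinv * Aᵀ * P) := by
    rw [hB1, trace_mul_comm, ← mul_assoc, ← hPdef, trace_mul_comm]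
  have htr3 : A * Pinv * Aᵀ * P = U * (C * E * Cᵀ * diagonal d) * Uᵀ := by
    rw [← hACT, ← hAC, hPinvEq, hspec, hconjmul, hconjmul, hconjmul]
  have htrB : trace ((gm * A * gi) * (gm * A * gi)ᵀ)
      = ∑ i, ∑ j, C i j ^ 2 * (d i / d j) := by
    rw [htr2, htr3, trace_conj' _ _ hU1]
    have := trace_formula' C (fun i => (d i)⁻¹) d
    rw [hEdef, this]
    refine Finset.sum_congr rfl fun i _ => Finset.sum_congr rfl fun j _ => ?_
    rw [div_eq_mul_inv]; ring
  -- normality of C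
  have hCnorm : C * Cᵀ = Cᵀ * C := by
    have h1 : C * Cᵀ = Uᵀ * (A * Aᵀ) * U := by rw [hCT, hCdef, hconjmul']
    have h2 : Cᵀ * C = Uᵀ * (Aᵀ * A) * U := by rw [hCT, hCdef, hconjmul']
    rw [h1, h2, hA]
  have hrow : ∀ i, (∑ j, C i j ^ 2) = ∑ j, C j i ^ 2 := by
    intro i
    have h : (C * Cᵀ) i i = (Cᵀ * C) i i := by rw [hCnorm]
    simpa [mul_apply, sq] using h
  -- apply the scalar inequality
  obtain ⟨hle, heqc⟩ := scalar_key d hdpos (fun i j => C i j ^ 2)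
    (fun i j => sq_nonneg _) hrow
  have hsqA : (∑ i, ∑ j, A i j ^ 2) = trace (A * Aᵀ) := (trace_sq' A).symm
  have hsqB : (∑ i, ∑ j, ((gm * A * gi)) i j ^ 2) = trace ((gm * A * gi) * (gm * A * gi)ᵀ) :=
    (trace_sq' _).symm
  constructor
  · rw [hsqA, hsqB, htr1, htrB]
    exact hle
  · intro heq
    rw [hsqA, hsqB, htr1, htrB] at heq
    have hOr := heqc heq
    -- D commutes with C
    have hDC : diagonal d * C = C * diagonal d := by
      ext i j
      simp only [diagonal_mul, mul_diagonal]
      rcases hOr i j with h | h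
      · have : C i j = 0 := by
          have := sq_eq_zero_iff.mp h
          exact this
        rw [this, mul_zero, zero_mul]
      · rw [h, mul_comm]
    have hAP : A * P = P * A := by
      rw [← hAC, hspec, hconjmul, hconjmul, hDC]
    have hATP : Aᵀ * P = P * Aᵀ := by
      have h := congrArg Matrix.transpose hAP
      simp only [transpose_mul, hPsym] at h
      exact h.symm
    have hAPinv : A * Pinv = Pinv * A := by
      calc A * Pinv = 1 * (A * Pinv) := (one_mul _).symm
        _ = (Pinv * P) * (A * Pinv) := by rw [hPinvP]
        _ = Pinv * (P * A) * Pinv := by noncomm_ring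
        _ = Pinv * (A * P) * Pinv := by rw [hAP]
        _ = (Pinv * A) * (P * Pinv) := by noncomm_ring
        _ = Pinv * A := by rw [hPPinv, mul_one]
    have hATPinv : Aᵀ * Pinv = Pinv * Aᵀ := by
      have h := congrArg Matrix.transpose hAPinv
      simp only [transpose_mul, hPinvsym] at h
      exact h.symm
    -- gi in terms of Pinv
    have hgieq : gi = Pinv * gmᵀ := by
      rw [hPinvdef]
      calc gi = gi * 1 := (mul_one _).symm
        _ = gi * (giᵀ * gmᵀ) := by rw [hgit]
        _ = gi * giᵀ * gmᵀ := by noncomm_ring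
    have hgiteq : giᵀ = gm * Pinv := by
      have h := congrArg Matrix.transpose hgieq
      simp only [transpose_mul, transpose_transpose, hPinvsym] at h
      exact h
    have hB2 : (gm * A * gi)ᵀ * (gm * A * gi) = giᵀ * (Aᵀ * P * A) * gi := by
      rw [hPdef]
      simp only [transpose_mul]
      noncomm_ring
    have hkey : Pinv * (Aᵀ * P * A) * Pinv = A * Pinv * Aᵀ := by
      calc Pinv * (Aᵀ * P * A) * Pinv
          = Pinv * (Aᵀ * P) * (A * Pinv) := by noncomm_ring
        _ = Pinv * (P * Aᵀ) * (A * Pinv) := by rw [hATP]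
        _ = (Pinv * P) * (Aᵀ * (A * Pinv)) := by noncomm_ring
        _ = Aᵀ * (A * Pinv) := by rw [hPinvP, one_mul]
        _ = (Aᵀ * A) * Pinv := by noncomm_ring
        _ = (A * Aᵀ) * Pinv := by rw [hA]
        _ = A * (Aᵀ * Pinv) := by noncomm_ring
        _ = A * (Pinv * Aᵀ) := by rw [hATPinv]
        _ = A * Pinv * Aᵀ := by noncomm_ring
    rw [hB1, hB2, hgiteq, hgieq]
    calc gm * (A * Pinv * Aᵀ) * gmᵀ
        = gm * (A * Pinv * Aᵀ) * gmᵀ := rfl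
      _ = gm * (Pinv * (Aᵀ * P * A) * Pinv) * gmᵀ := by rw [hkey]
      _ = gm * Pinv * (Aᵀ * P * A) * (Pinv * gmᵀ) := by noncomm_ring

/-- Frobenius norm of a real square matrix. -/
noncomputable def frobNorm {n : ℕ} (A : Matrix (Fin n) (Fin n) ℝ) : ℝ :=
  Real.sqrt (∑ i, ∑ j, A i j ^ 2)

theorem stmt13 (n : ℕ) (A : Matrix (Fin n) (Fin n) ℝ) (hA : A * Aᵀ = Aᵀ * A) :
    ∀ g : GL (Fin n) ℝ,
      frobNorm A ≤ frobNorm ((g : Matrix (Fin n) (Fin n) ℝ) * A * (↑g⁻¹ : Matrix (Fin n) (Fin n) ℝ)) ∧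
      (frobNorm A = frobNorm ((g : Matrix (Fin n) (Fin n) ℝ) * A * (↑g⁻¹ : Matrix (Fin n) (Fin n) ℝ)) →
        ((g : Matrix (Fin n) (Fin n) ℝ) * A * (↑g⁻¹ : Matrix (Fin n) (Fin n) ℝ))
            * ((g : Matrix (Fin n) (Fin n) ℝ) * A * (↑g⁻¹ : Matrix (Fin n) (Fin n) ℝ))ᵀ
          = ((g : Matrix (Fin n) (Fin n) ℝ) * A * (↑g⁻¹ : Matrix (Fin n) (Fin n) ℝ))ᵀ
            * ((g : Matrix (Fin n) (Fin n) ℝ) * A * (↑g⁻¹ : Matrix (Fin n) (Fin n) ℝ))) := by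
  intro g
  obtain ⟨hle, heqi⟩ := main_ineq A hA g
  have hAnn : 0 ≤ ∑ i, ∑ j, A i j ^ 2 :=
    Finset.sum_nonneg fun i _ => Finset.sum_nonneg fun j _ => sq_nonneg _
  have hBnn : 0 ≤ ∑ i, ∑ j,
      ((g : Matrix (Fin n) (Fin n) ℝ) * A * (↑g⁻¹ : Matrix (Fin n) (Fin n) ℝ)) i j ^ 2 :=
    Finset.sum_nonneg fun i _ => Finset.sum_nonneg fun j _ => sq_nonneg _
  constructor
  · exact Real.sqrt_le_sqrt hle
  · intro heq
    apply heqi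
    have hA2 : (∑ i, ∑ j, A i j ^ 2) = frobNorm A ^ 2 := (Real.sq_sqrt hAnn).symm
    have hB2 : (∑ i, ∑ j,
        ((g : Matrix (Fin n) (Fin n) ℝ) * A * (↑g⁻¹ : Matrix (Fin n) (Fin n) ℝ)) i j ^ 2)
        = frobNorm ((g : Matrix (Fin n) (Fin n) ℝ) * A
            * (↑g⁻¹ : Matrix (Fin n) (Fin n) ℝ)) ^ 2 := (Real.sq_sqrt hBnn).symm
    rw [hA2, hB2, heq]
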